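/- arXiv:2002.11546 — 2 statements merged into one kernel-verified Lean document; each statement's English description precedes it below -/
import Mathlib

section
/- Let n be a positive natural number, let h : ℝⁿ → ℝ be a convex function that is positively 1-homogeneous (that is, h(c·x) = c·h(x) for every c > 0 and every x ∈ ℝⁿ), let μ > 0, and let z, x⋆ ∈ ℝⁿ. Then x⋆ is a minimizer over ℝⁿ of the function x ↦ (1/2)‖x − μ·z‖² + h(x) if and only if (1/μ)·x⋆ is a minimizer over ℝⁿ of the function u ↦ (1/2)‖u − z‖² + (1/μ)·h(u). (Consequently, for a 1-homogeneous regularizer h, the scaled denoiser D_μ(z) := (1/μ)·prox_h(μ·z) equals prox_{μ⁻¹ h}(z), so denoiser scaling is equivalent to tuning the regularization parameter in front of h.) -/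
/-- **1-homogeneous regularizers.**
For a convex, positively 1-homogeneous regularizer `h : ℝⁿ → ℝ`, `μ > 0`,
and `z, x⋆ ∈ ℝⁿ`, `x⋆` minimizes `x ↦ (1/2)‖x − μz‖² + h(x)` iff `(1/μ)·x⋆`
minimizes `u ↦ (1/2)‖u − z‖² + (1/μ)·h(u)`.  In other words the scaled
denoiser `D_μ(z) = (1/μ)·prox_h(μz)` equals `prox_{μ⁻¹·h}(z)`, so denoiser
scaling is equivalent to tuning the regularization parameter in front of `h`. -/
theorem scaled_denoiser_of_one_homogeneous_regularizer
    (n : ℕ) (hn : 0 < n)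
    (h : EuclideanSpace ℝ (Fin n) → ℝ)
    (hconv : ConvexOn ℝ Set.univ h)
    (hhom : ∀ c : ℝ, 0 < c → ∀ x : EuclideanSpace ℝ (Fin n), h (c • x) = c * h x)
    (μ : ℝ) (hμ : 0 < μ)
    (z xstar : EuclideanSpace ℝ (Fin n)) :
    (∀ x : EuclideanSpace ℝ (Fin n),
        (1 / 2) * ‖xstar - μ • z‖ ^ 2 + h xstar ≤ (1 / 2) * ‖x - μ • z‖ ^ 2 + h x)
    ↔
    (∀ u : EuclideanSpace ℝ (Fin n),
        (1 / 2) * ‖(1 / μ) • xstar - z‖ ^ 2 + (1 / μ) * h ((1 / μ) • xstar)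
          ≤ (1 / 2) * ‖u - z‖ ^ 2 + (1 / μ) * h u) := by
  have hμ' : (1 / μ) > 0 := by positivity
  have key : ∀ x : EuclideanSpace ℝ (Fin n),
      (1 / 2) * ‖(1 / μ) • x - z‖ ^ 2 + (1 / μ) * h ((1 / μ) • x)
        = (1 / μ ^ 2) * ((1 / 2) * ‖x - μ • z‖ ^ 2 + h x) := by
    intro x
    have h1 : (1 / μ) • x - z = (1 / μ) • (x - μ • z) := by
      rw [smul_sub, smul_smul]
      field_simp
      rw [one_smul]
    rw [h1, norm_smul, hhom _ hμ']
    have : ‖(1 / μ : ℝ)‖ = 1 / μ := Real.norm_of_nonneg hμ'.le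
    rw [this, mul_pow]
    ring
  constructor
  · intro hF u
    have h2 : (1 / μ) • (μ • u) = u := by
      rw [smul_smul]; field_simp
      rw [one_smul]
    have := hF (μ • u)
    calc (1 / 2) * ‖(1 / μ) • xstar - z‖ ^ 2 + (1 / μ) * h ((1 / μ) • xstar)
        = (1 / μ ^ 2) * ((1 / 2) * ‖xstar - μ • z‖ ^ 2 + h xstar) := key xstar
      _ ≤ (1 / μ ^ 2) * ((1 / 2) * ‖μ • u - μ • z‖ ^ 2 + h (μ • u)) := by
          apply mul_le_mul_of_nonneg_left (hF (μ • u)) (by positivity)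
      _ = (1 / 2) * ‖(1 / μ) • (μ • u) - z‖ ^ 2 + (1 / μ) * h ((1 / μ) • (μ • u)) :=
          (key (μ • u)).symm
      _ = (1 / 2) * ‖u - z‖ ^ 2 + (1 / μ) * h u := by rw [h2]
  · intro hG x
    have h3 := hG ((1 / μ) • x)
    rw [key x, key xstar] at h3
    exact le_of_mul_le_mul_left (by linarith) (by positivity : (0:ℝ) < 1 / μ ^ 2)
end

section
/- Let n be a positive natural number, let g : ℝⁿ → ℝ be a convex differentiable function with gradient ∇g, let D : ℝⁿ → ℝⁿ be any map (a denoiser), let μ > 0 and γ > 0, and define the scaled denoiser D_μ(w) := (1/μ)·D(μ·w). Then x ∈ ℝⁿ is a fixed point of the PnP-ISTA update with the scaled denoiser, i.e. x = D_μ(x − γ·∇g(x)), if and only if there exists z ∈ ℝⁿ such that both (i) μ·x = D(μ·x − z) and (ii) μ·x is the (unique) minimizer over ℝⁿ of u ↦ (1/2)‖u − (μ·x + z)‖² + γ·μ²·g(u/μ); moreover in that case z = γ·μ·∇g(x). (This expresses the consensus-equilibrium characterization: the fixed points of PnP with the scaled denoiser satisfy μx = prox_{(γμ²)g(·/μ)}(μx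 + z) and μx = D(μx − z).) -/
open InnerProductSpace

local notation "⟪" a ", " b "⟫" => @inner ℝ _ _ a b

/-- First-order condition for convex differentiable functions. -/
lemma convex_first_order_aux {F : Type*} [NormedAddCommGroup F] [InnerProductSpace ℝ F]
    [CompleteSpace F] {g : F → ℝ} {G x : F} (hconv : ConvexOn ℝ Set.univ g)
    (hg : HasGradientAt g G x) (y : F) :
    ⟪G, y - x⟫ ≤ g y - g x := by
  have hφconv : ConvexOn ℝ Set.univ (fun t : ℝ => g (t • (y - x) + x)) := by
    have h0 := hconv.comp_affineMap (AffineMap.lineMap x y : ℝ →ᵃ[ℝ] F)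
    simpa [Function.comp_def, AffineMap.lineMap_apply] using h0
  have h1 : HasDerivAt (fun t : ℝ => t • (y - x) + x) (y - x) 0 := by
    simpa using ((hasDerivAt_id (0:ℝ)).smul_const (y - x)).add_const x
  have h2 : HasFDerivAt g ((toDual ℝ F) G) x := hasGradientAt_iff_hasFDerivAt.mp hg
  have hd : HasDerivAt (fun t : ℝ => g (t • (y - x) + x)) ⟪G, y - x⟫ 0 := by
    have h3 : HasFDerivAt g ((toDual ℝ F) G) ((0:ℝ) • (y - x) + x) := by simpa using h2
    simpa [toDual_apply_apply, Function.comp_def] using h3.comp_hasDerivAt (0:ℝ) h1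
  have := hφconv.le_slope_of_hasDerivAt (Set.mem_univ (0:ℝ)) (Set.mem_univ (1:ℝ)) one_pos hd
  simpa [slope_def_field] using this

lemma min_implies_z_aux {F : Type*} [NormedAddCommGroup F] [InnerProductSpace ℝ F] [CompleteSpace F]
    {g : F → ℝ} {g' : F → F} (hgrad : ∀ x, HasGradientAt g (g' x) x)
    {μ γ : ℝ} (hμ : 0 < μ) (x z : F)
    (hmin : ∀ u, (1/2)*‖μ • x - (μ • x + z)‖^2 + γ*μ^2*g ((1/μ) • (μ • x))
        ≤ (1/2)*‖u - (μ • x + z)‖^2 + γ*μ^2*g ((1/μ) • u)) :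
    z = (γ*μ) • g' x := by
  have hμ' : μ ≠ 0 := hμ.ne'
  set p := μ • x with hp
  set v := p + z with hv
  have hpx : (1/μ) • p = x := by
    rw [hp, smul_smul, one_div, inv_mul_cancel₀ hμ', one_smul]
  have h1 : HasFDerivAt (fun u : F => u - v) (ContinuousLinearMap.id ℝ F) p := by
    simpa using (hasFDerivAt_id p).sub_const v
  have hinner : HasFDerivAt (fun u : F => ⟪u - v, u - v⟫)
      ((fderivInnerCLM ℝ (p - v, p - v)).comp
        ((ContinuousLinearMap.id ℝ F).prod (ContinuousLinearMap.id ℝ F))) p :=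
    h1.inner ℝ h1
  have hL : HasFDerivAt (fun u : F => (1/μ) • u) ((1/μ) • ContinuousLinearMap.id ℝ F) p :=
    (hasFDerivAt_id p).const_smul (1/μ)
  have hgx : HasFDerivAt g ((toDual ℝ F) (g' x)) ((1/μ) • p) := by
    rw [hpx]; exact hasGradientAt_iff_hasFDerivAt.mp (hgrad x)
  have hcomp : HasFDerivAt (fun u : F => g ((1/μ) • u))
      (((toDual ℝ F) (g' x)).comp ((1/μ) • ContinuousLinearMap.id ℝ F)) p :=
    hgx.comp p hL
  have htot : HasFDerivAt (fun u : F => (1/2)*‖u - v‖^2 + γ*μ^2*g ((1/μ) • u))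
      ((1/2 : ℝ) • ((fderivInnerCLM ℝ (p - v, p - v)).comp
        ((ContinuousLinearMap.id ℝ F).prod (ContinuousLinearMap.id ℝ F)))
       + (γ*μ^2 : ℝ) • (((toDual ℝ F) (g' x)).comp ((1/μ) • ContinuousLinearMap.id ℝ F))) p := by
    have := (hinner.const_mul (1/2 : ℝ)).add (hcomp.const_mul (γ*μ^2 : ℝ))
    have heq : (fun u : F => (1/2)*⟪u - v, u - v⟫ + γ*μ^2*g ((1/μ) • u))
        = (fun u : F => (1/2)*‖u - v‖^2 + γ*μ^2*g ((1/μ) • u)) := by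
      funext u; rw [real_inner_self_eq_norm_sq]
    rw [← heq]; exact this
  have hlm : IsLocalMin (fun u : F => (1/2)*‖u - v‖^2 + γ*μ^2*g ((1/μ) • u)) p :=
    Filter.Eventually.of_forall (fun u => hmin u)
  have hzero := hlm.hasFDerivAt_eq_zero htot
  set w := (γ*μ) • g' x - z with hw
  have hev := ContinuousLinearMap.ext_iff.mp hzero w
  simp only [ContinuousLinearMap.add_apply, ContinuousLinearMap.smul_apply,
    ContinuousLinearMap.coe_comp', Function.comp_apply, fderivInnerCLM_apply,
    ContinuousLinearMap.prod_apply, ContinuousLinearMap.id_apply,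
    toDual_apply_apply, ContinuousLinearMap.zero_apply, smul_eq_mul] at hev
  have hpv : p - v = -z := by rw [hv]; abel
  rw [hpv] at hev
  have hkey : ⟪w, w⟫ = 0 := by
    rw [hw, inner_sub_left, real_inner_smul_left]
    have h1 : ⟪-z, w⟫ = -⟪z, w⟫ := inner_neg_left z w
    have h2 : ⟪w, -z⟫ = -⟪z, w⟫ := by rw [inner_neg_right, real_inner_comm]
    have h3 : ⟪g' x, (1/μ) • w⟫ = (1/μ) * ⟪g' x, w⟫ := real_inner_smul_right _ _ _
    rw [h1, h2, h3] at hev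
    have h4 : γ * μ ^ 2 * ((1/μ) * ⟪g' x, w⟫) = γ * μ * ⟪g' x, w⟫ := by
      field_simp
    rw [h4] at hev
    linarith [hev]
  have := inner_self_eq_zero.mp hkey
  rw [hw] at this
  rw [sub_eq_zero] at this
  exact this.symm



/-- **Proposition 3 (consensus-equilibrium interpretation).**
Let `g : ℝⁿ → ℝ` be convex and differentiable with gradient `g'`, let
`D : ℝⁿ → ℝⁿ` be any denoiser, `μ, γ > 0`, and let
`D_μ(w) := (1/μ)·D(μw)` be the scaled denoiser.  Then `x` is a fixed point of
the PnP-ISTA update with the scaled denoiser, `x = D_μ(x − γ∇g(x))`, iff there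
exists `z` such that (i) `μx = D(μx − z)` and (ii) `μx` minimizes
`u ↦ (1/2)‖u − (μx + z)‖² + γμ²·g(u/μ)` (i.e. `μx = prox_{(γμ²)g(·/μ)}(μx + z)`);
moreover any such `z` equals `γμ∇g(x)`. -/
theorem pnp_ista_fixed_point_consensus_equilibrium
    (n : ℕ) (hn : 0 < n)
    (g : EuclideanSpace ℝ (Fin n) → ℝ)
    (g' : EuclideanSpace ℝ (Fin n) → EuclideanSpace ℝ (Fin n))
    (hconv : ConvexOn ℝ Set.univ g)
    (hgrad : ∀ x, HasGradientAt g (g' x) x)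
    (D : EuclideanSpace ℝ (Fin n) → EuclideanSpace ℝ (Fin n))
    (μ γ : ℝ) (hμ : 0 < μ) (hγ : 0 < γ)
    (Dμ : EuclideanSpace ℝ (Fin n) → EuclideanSpace ℝ (Fin n))
    (hDμ : ∀ w, Dμ w = (1 / μ) • D (μ • w))
    (x : EuclideanSpace ℝ (Fin n)) :
    (x = Dμ (x - γ • g' x)
      ↔ ∃ z : EuclideanSpace ℝ (Fin n),
          μ • x = D (μ • x - z) ∧
          (∀ u : EuclideanSpace ℝ (Fin n),
            (1 / 2) * ‖μ • x - (μ • x + z)‖ ^ 2 + γ * μ ^ 2 * g ((1 / μ) • (μ • x))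
              ≤ (1 / 2) * ‖u - (μ • x + z)‖ ^ 2 + γ * μ ^ 2 * g ((1 / μ) • u)))
    ∧
    (∀ z : EuclideanSpace ℝ (Fin n),
        (μ • x = D (μ • x - z) ∧
          (∀ u : EuclideanSpace ℝ (Fin n),
            (1 / 2) * ‖μ • x - (μ • x + z)‖ ^ 2 + γ * μ ^ 2 * g ((1 / μ) • (μ • x))
              ≤ (1 / 2) * ‖u - (μ • x + z)‖ ^ 2 + γ * μ ^ 2 * g ((1 / μ) • u)))
        → z = (γ * μ) • g' x) := by
  have hμ' : μ ≠ 0 := hμ.ne'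
  have hpx : (1 / μ) • (μ • x) = x := by
    rw [smul_smul, one_div, inv_mul_cancel₀ hμ', one_smul]
  -- fixed point equation ↔ μx = D(μx - γμ g'(x))
  have hfp : (x = Dμ (x - γ • g' x)) ↔ (μ • x = D (μ • x - (γ * μ) • g' x)) := by
    rw [hDμ]
    have harg : μ • (x - γ • g' x) = μ • x - (γ * μ) • g' x := by
      rw [smul_sub, smul_smul, mul_comm μ γ]
    rw [harg]
    constructor
    · intro h
      conv_lhs => rw [h]
      rw [smul_smul, mul_one_div, div_self hμ', one_smul]
    · intro h
      rw [← h, smul_smul, one_div, inv_mul_cancel₀ hμ', one_smul]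
  -- minimality for z = γμ g'(x)
  have hminz : ∀ u : EuclideanSpace ℝ (Fin n),
      (1 / 2) * ‖μ • x - (μ • x + (γ * μ) • g' x)‖ ^ 2 + γ * μ ^ 2 * g ((1 / μ) • (μ • x))
        ≤ (1 / 2) * ‖u - (μ • x + (γ * μ) • g' x)‖ ^ 2 + γ * μ ^ 2 * g ((1 / μ) • u) := by
    intro u
    set z := (γ * μ) • g' x with hz
    set a := u - μ • x with ha
    have e1 : μ • x - (μ • x + z) = -z := by abel
    have e2 : u - (μ • x + z) = a - z := by rw [ha]; abel
    rw [e1, e2, hpx]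
    -- first-order bound
    have hfo := convex_first_order_aux hconv (hgrad x) ((1 / μ) • u)
    have e3 : (1 / μ) • u - x = (1 / μ) • a := by
      rw [ha, smul_sub, hpx]
    rw [e3] at hfo
    have hfo' : (γ * μ ^ 2) * ⟪g' x, (1 / μ) • a⟫ ≤ γ * μ ^ 2 * (g ((1 / μ) • u) - g x) := by
      have hc : (0:ℝ) ≤ γ * μ ^ 2 := le_of_lt (by positivity)
      exact mul_le_mul_of_nonneg_left hfo hc
    have e4 : (γ * μ ^ 2) * ⟪g' x, (1 / μ) • a⟫ = ⟪z, a⟫ := by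
      rw [real_inner_smul_right, hz, real_inner_smul_left]
      field_simp
    rw [e4] at hfo'
    -- norm expansion
    have e5 : ‖a - z‖ ^ 2 = ‖a‖ ^ 2 - 2 * ⟪a, z⟫ + ‖z‖ ^ 2 := norm_sub_sq_real a z
    have e6 : ‖-z‖ = ‖z‖ := norm_neg z
    have e7 : ⟪z, a⟫ = ⟪a, z⟫ := real_inner_comm a z
    have e6' : ‖-z‖ ^ 2 = ‖z‖ ^ 2 := by rw [norm_neg]
    have e8 : (0:ℝ) ≤ ‖a‖ ^ 2 := by positivity
    linarith [hfo', e5, e7, e8, e6']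
  refine ⟨?_, ?_⟩
  · constructor
    · intro h
      exact ⟨(γ * μ) • g' x, hfp.mp h, hminz⟩
    · rintro ⟨z, hD, hmin⟩
      have hz : z = (γ * μ) • g' x := by
        have := min_implies_z_aux hgrad hμ x z (by
          intro u; simpa using hmin u)
        simpa using this
      rw [hz] at hD
      exact hfp.mpr hD
  · rintro z ⟨hD, hmin⟩
    have := min_implies_z_aux hgrad hμ x z (by intro u; simpa using hmin u)
    simpa using this
end
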